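/- Let p be a prime, let r ≥ 1, let G = (ℤ/pℤ)^r, and let G₁, …, G_N be the complete list of subgroups of G of index p (so N = (p^r − 1)/(p − 1)). Then in the group ring ℚ[G], the idempotents satisfy Σ_{i=1}^{N} ε_{G_i} = ((p^r − p)/(p − 1))·ε_G + e, where e ∈ G is the identity element. -/

import Mathlib

open Function

/-- The idempotent `ε_H = (1/|H|) ∑_{σ ∈ H} σ` in the group ring `ℚ[G]`. -/
noncomputable def groupRingIdempotent {G : Type*} [Group G] [Finite G] (H : Subgroup G) :
    MonoidAlgebra ℚ G :=
  haveI : Fintype H := Fintype.ofFinite H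
  (Nat.card H : ℚ)⁻¹ • ∑ σ : H, MonoidAlgebra.of ℚ G (σ : G)

section aux
variable {p : ℕ} [Fact p.Prime] {M : Type*} [AddCommGroup M] [Module (ZMod p) M]

private lemma aux_surj (φ : M →ₗ[ZMod p] ZMod p) (hφ : φ ≠ 0) : Surjective φ := by
  rcases Ideal.eq_bot_or_top (LinearMap.range φ) with h | h
  · exact absurd (LinearMap.range_eq_bot.1 h) hφ
  · exact LinearMap.range_eq_top.1 h

private lemma aux_index_ker (φ : M →ₗ[ZMod p] ZMod p) (hφ : φ ≠ 0) :
    (LinearMap.ker φ).toAddSubgroup.index = p := by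
  have h1 : (LinearMap.ker φ).toAddSubgroup = (φ.toAddMonoidHom).ker := rfl
  have h2 : (φ.toAddMonoidHom).range = ⊤ := AddMonoidHom.range_eq_top.2 (aux_surj φ hφ)
  rw [h1, AddSubgroup.index_ker, h2, AddSubgroup.card_top, Nat.card_zmod]

private lemma aux_exists (W : Submodule (ZMod p) M) (hW : W.toAddSubgroup.index = p) :
    ∃ φ : M →ₗ[ZMod p] ZMod p, φ ≠ 0 ∧ LinearMap.ker φ = W := by
  have hp : p.Prime := Fact.out
  have hcard : Nat.card (M ⧸ W) = p := hW
  have hfin : Finite (M ⧸ W) := Nat.finite_of_card_ne_zero (by rw [hcard]; exact hp.ne_zero)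
  have hnt : Nontrivial (M ⧸ W) :=
    Finite.one_lt_card_iff_nontrivial.1 (by rw [hcard]; exact hp.one_lt)
  obtain ⟨x, hx⟩ := exists_ne (0 : M ⧸ W)
  obtain ⟨ψ, hψx⟩ : ∃ ψ : Module.Dual (ZMod p) (M ⧸ W), ψ x ≠ 0 := by
    by_contra h; push_neg at h
    exact hx ((Module.forall_dual_apply_eq_zero_iff (ZMod p) x).1 h)
  have hψ : ψ ≠ 0 := fun h => hψx (by simp [h])
  have hsurj := aux_surj ψ hψ
  haveI : Fintype (M ⧸ W) := Fintype.ofFinite _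
  have hinj : Injective ψ :=
    (Finite.injective_iff_surjective_of_equiv
      (Fintype.equivOfCardEq (by
        rw [← Nat.card_eq_fintype_card, hcard, ← Nat.card_eq_fintype_card, Nat.card_zmod]))).2
      hsurj
  refine ⟨ψ.comp W.mkQ, ?_, ?_⟩
  · intro h
    obtain ⟨y, rfl⟩ := W.mkQ_surjective x
    have := congrArg (fun f : M →ₗ[ZMod p] ZMod p => f y) h
    simpa using hψx this
  · rw [LinearMap.ker_comp, LinearMap.ker_eq_bot.2 hinj, Submodule.comap_bot, Submodule.ker_mkQ]

private lemma aux_scale (φ ψ : M →ₗ[ZMod p] ZMod p) (hφ : φ ≠ 0)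
    (h : LinearMap.ker φ = LinearMap.ker ψ) : ∃ c : ZMod p, c ≠ 0 ∧ ψ = c • φ := by
  obtain ⟨g₀, hg₀⟩ : ∃ g₀, φ g₀ ≠ 0 := by
    by_contra hc; push_neg at hc; exact hφ (LinearMap.ext fun v => by simp [hc])
  have hg₀' : ψ g₀ ≠ 0 := by
    intro h0
    have hmem : g₀ ∈ LinearMap.ker ψ := h0
    rw [← h] at hmem; exact hg₀ hmem
  refine ⟨ψ g₀ / φ g₀, div_ne_zero hg₀' hg₀, LinearMap.ext fun v => ?_⟩
  have hm : φ g₀ • v - φ v • g₀ ∈ LinearMap.ker φ := by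
    simp [LinearMap.mem_ker, smul_eq_mul, mul_comm]
  rw [h] at hm
  have h2 := LinearMap.mem_ker.1 hm
  simp only [map_sub, map_smul, smul_eq_mul] at h2
  rw [LinearMap.smul_apply, smul_eq_mul]
  field_simp
  linear_combination h2

private lemma aux_fiber (W : Submodule (ZMod p) M) (hW : W.toAddSubgroup.index = p) :
    Nat.card {φ : M →ₗ[ZMod p] ZMod p // φ ≠ 0 ∧ LinearMap.ker φ = W} = p - 1 := by
  obtain ⟨φ₀, hφ₀, hker⟩ := aux_exists W hW
  have e : {c : ZMod p // c ≠ 0} ≃ {φ : M →ₗ[ZMod p] ZMod p // φ ≠ 0 ∧ LinearMap.ker φ = W} := by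
    refine Equiv.ofBijective
      (fun c => ⟨c.1 • φ₀, fun h => ?_, by rw [LinearMap.ker_smul _ _ c.2, hker]⟩) ⟨?_, ?_⟩
    · rcases smul_eq_zero.1 h with h' | h'
      exacts [c.2 h', hφ₀ h']
    · intro c₁ c₂ hcc
      have h1 := congrArg
        (fun x : {φ : M →ₗ[ZMod p] ZMod p // φ ≠ 0 ∧ LinearMap.ker φ = W} => x.1) hcc
      exact Subtype.ext (smul_left_injective (ZMod p) hφ₀ h1)
    · rintro ⟨φ, hφ, hkerφ⟩
      obtain ⟨c, hc, rfl⟩ := aux_scale φ₀ φ hφ₀ (hker.trans hkerφ.symm)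
      exact ⟨⟨c, hc⟩, rfl⟩
  rw [← Nat.card_congr e, Nat.card_eq_fintype_card]
  simp [Fintype.card_subtype_compl, ZMod.card]

end aux

open scoped Classical in
private lemma idem_apply {G : Type*} [Group G] [Finite G] (H : Subgroup G) (x : G) :
    (groupRingIdempotent H).coeff x = if x ∈ H then (Nat.card H : ℚ)⁻¹ else 0 := by
  haveI : Fintype H := Fintype.ofFinite H
  rw [groupRingIdempotent]
  rw [MonoidAlgebra.coeff_smul, Finsupp.smul_apply, MonoidAlgebra.coeff_sum, Finsupp.finset_sum_apply]
  simp only [MonoidAlgebra.of_apply, MonoidAlgebra.coeff_single, Finsupp.single_apply]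
  by_cases hx : x ∈ H
  · rw [if_pos hx]
    have : ∀ σ : H, (if (σ : G) = x then (1:ℚ) else 0) = if σ = ⟨x, hx⟩ then 1 else 0 := by
      intro σ; simp [Subtype.ext_iff]
    rw [Finset.sum_congr rfl fun σ _ => this σ]
    simp
  · rw [if_neg hx, Finset.sum_eq_zero, smul_zero]
    intro σ _
    rw [if_neg]
    rintro rfl
    exact hx σ.2

theorem stmt5 (p r : ℕ) [Fact p.Prime] (hr : 1 ≤ r)
    (s : Finset (Subgroup (Multiplicative (Fin r → ZMod p))))
    (hs : ∀ H : Subgroup (Multiplicative (Fin r → ZMod p)), H ∈ s ↔ H.index = p) :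
    ∑ H ∈ s, groupRingIdempotent H =
      (((p : ℚ) ^ r - p) / ((p : ℚ) - 1)) •
          groupRingIdempotent (⊤ : Subgroup (Multiplicative (Fin r → ZMod p))) +
        MonoidAlgebra.of ℚ (Multiplicative (Fin r → ZMod p)) 1 := by
  classical
  have hp : p.Prime := Fact.out
  obtain ⟨m, rfl⟩ : ∃ m, r = m + 1 := ⟨r - 1, (Nat.succ_pred_eq_of_pos hr).symm⟩
  haveI : Finite ((Fin (m+1) → ZMod p) →ₗ[ZMod p] ZMod p) :=
    Finite.of_injective _ (DFunLike.coe_injective)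
  haveI : Fintype ((Fin (m+1) → ZMod p) →ₗ[ZMod p] ZMod p) := Fintype.ofFinite _
  set D := ((Fin (m+1) → ZMod p) →ₗ[ZMod p] ZMod p) with hD
  -- cardinalities
  have hVcard : Nat.card (Fin (m+1) → ZMod p) = p ^ (m+1) := by
    simp [Nat.card_pi, Nat.card_zmod]
  have hGcard : Nat.card (Multiplicative (Fin (m+1) → ZMod p)) = p ^ (m+1) := by
    rw [Nat.card_congr Multiplicative.toAdd, hVcard]
  have hDcard : Fintype.card D = p ^ (m+1) := by
    rw [← Nat.card_eq_fintype_card,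
      Nat.card_congr (LinearEquiv.piRing (ZMod p) (ZMod p) (Fin (m+1)) (ZMod p)).toEquiv, hVcard]
  -- the kernel-of-functional map
  set kerSub : D → Subgroup (Multiplicative (Fin (m+1) → ZMod p)) :=
    fun φ => AddSubgroup.toSubgroup (LinearMap.ker φ).toAddSubgroup with hkerSub
  have hmem : ∀ (φ : D) (g : Multiplicative (Fin (m+1) → ZMod p)),
      g ∈ kerSub φ ↔ φ (Multiplicative.toAdd g) = 0 := fun φ g => Iff.rfl
  have hker_mem : ∀ φ : D, φ ≠ 0 → kerSub φ ∈ s := by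
    intro φ hφ
    rw [hs, hkerSub]
    rw [AddSubgroup.index_toSubgroup]
    exact aux_index_ker φ hφ
  -- fiber count
  have hfiber : ∀ H ∈ s,
      (Finset.univ.filter fun φ : D => φ ≠ 0 ∧ kerSub φ = H).card = p - 1 := by
    intro H hH
    have hHind : H.index = p := (hs H).1 hH
    set SH := AddSubgroup.toSubgroup.symm H with hSH
    have hHS : AddSubgroup.toSubgroup SH = H := AddSubgroup.toSubgroup.apply_symm_apply H
    set WH := AddSubgroup.toZModSubmodule p SH with hWH
    have hWHadd : WH.toAddSubgroup = SH := rfl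
    have hWHind : WH.toAddSubgroup.index = p := by
      rw [hWHadd, ← AddSubgroup.index_toSubgroup, hHS, hHind]
    have hiff : ∀ φ : D, (kerSub φ = H ↔ LinearMap.ker φ = WH) := by
      intro φ
      rw [← hHS, hkerSub]
      constructor
      · intro h
        have := AddSubgroup.toSubgroup.injective h
        rw [hWH, ← this, Submodule.toAddSubgroup_toZModSubmodule]
      · intro h
        show AddSubgroup.toSubgroup (LinearMap.ker φ).toAddSubgroup = AddSubgroup.toSubgroup SH
        rw [h, hWHadd]
    rw [← Fintype.card_subtype, ← Nat.card_eq_fintype_card,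
      Nat.card_congr (Equiv.subtypeEquivRight fun φ => by rw [hiff φ]),
      aux_fiber WH hWHind]
  -- count of s
  have hscard : s.card * (p - 1) = p ^ (m+1) - 1 := by
    have h1 : (Finset.univ.filter fun φ : D => φ ≠ 0).card
        = ∑ H ∈ s, ((Finset.univ.filter fun φ : D => φ ≠ 0).filter
            fun φ => kerSub φ = H).card :=
      Finset.card_eq_sum_card_fiberwise fun φ hφ =>
        hker_mem φ (Finset.mem_filter.1 hφ).2
    have h2 : ∀ H ∈ s,
        ((Finset.univ.filter fun φ : D => φ ≠ 0).filter fun φ => kerSub φ = H).card = p - 1 := by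
      intro H hH
      rw [Finset.filter_filter]
      exact hfiber H hH
    rw [Finset.sum_congr rfl h2, Finset.sum_const, smul_eq_mul, Finset.filter_ne',
      Finset.card_erase_of_mem (Finset.mem_univ _), Finset.card_univ, hDcard] at h1
    exact h1.symm
  -- counting index-p subgroups containing a fixed nontrivial element
  have hgcount : ∀ g : Multiplicative (Fin (m+1) → ZMod p), g ≠ 1 →
      (s.filter fun H => g ∈ H).card * (p - 1) = p ^ m - 1 := by
    intro g hg
    have hga : Multiplicative.toAdd g ≠ 0 := fun h => hg (toAdd_eq_zero.1 h)
    obtain ⟨φ₁, hφ₁⟩ : ∃ φ₁ : D, φ₁ (Multiplicative.toAdd g) ≠ 0 := by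
      by_contra h; push_neg at h
      exact hga ((Module.forall_dual_apply_eq_zero_iff (ZMod p) _).1 h)
    set E : D →ₗ[ZMod p] ZMod p :=
      { toFun := fun φ => φ (Multiplicative.toAdd g),
        map_add' := fun _ _ => rfl, map_smul' := fun _ _ => rfl } with hE
    have hE0 : E ≠ 0 := fun h => hφ₁ (by simpa [hE] using congrArg (fun f => f φ₁) h)
    have hEind := aux_index_ker E hE0
    have hEcard : Nat.card (LinearMap.ker E) = p ^ m := by
      have h3 := AddSubgroup.card_mul_index (LinearMap.ker E).toAddSubgroup
      have hDn : Nat.card D = p ^ (m+1) := by rw [Nat.card_eq_fintype_card, hDcard]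
      rw [hEind, hDn] at h3
      refine Nat.eq_of_mul_eq_mul_right hp.pos ?_
      rw [show Nat.card ↥(LinearMap.ker E)
        = Nat.card ↥(LinearMap.ker E).toAddSubgroup from rfl, h3, ← pow_succ]
    have hTg : (Finset.univ.filter
        fun φ : D => φ ≠ 0 ∧ φ (Multiplicative.toAdd g) = 0).card = p ^ m - 1 := by
      have heq : (Finset.univ.filter fun φ : D => φ ≠ 0 ∧ φ (Multiplicative.toAdd g) = 0)
          = (Finset.univ.filter fun φ : D => φ (Multiplicative.toAdd g) = 0).erase 0 := by
        ext φ
        simp only [Finset.mem_filter, Finset.mem_univ, true_and, Finset.mem_erase]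
      have hcards : (Finset.univ.filter
          fun φ : D => φ (Multiplicative.toAdd g) = 0).card = p ^ m := by
        rw [← Fintype.card_subtype, ← Nat.card_eq_fintype_card, ← hEcard]
        exact Nat.card_congr (Equiv.subtypeEquivRight fun φ =>
          Iff.rfl)
      have h0mem : (0:D) ∈ Finset.univ.filter
          (fun φ : D => φ (Multiplicative.toAdd g) = 0) :=
        Finset.mem_filter.2 ⟨Finset.mem_univ _, rfl⟩
      rw [heq, Finset.card_erase_of_mem h0mem, hcards]
    have h1 : (Finset.univ.filter
        fun φ : D => φ ≠ 0 ∧ φ (Multiplicative.toAdd g) = 0).card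
        = ∑ H ∈ s.filter (fun H => g ∈ H),
            ((Finset.univ.filter fun φ : D => φ ≠ 0 ∧ φ (Multiplicative.toAdd g) = 0).filter
              fun φ => kerSub φ = H).card := by
      refine Finset.card_eq_sum_card_fiberwise fun φ hφ => ?_
      rw [Finset.mem_coe, Finset.mem_filter] at hφ ⊢
      exact ⟨hker_mem φ hφ.2.1, (hmem φ g).2 hφ.2.2⟩
    have h2 : ∀ H ∈ s.filter (fun H => g ∈ H),
        ((Finset.univ.filter fun φ : D => φ ≠ 0 ∧ φ (Multiplicative.toAdd g) = 0).filter
          fun φ => kerSub φ = H).card = p - 1 := by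
      intro H hH
      rw [Finset.mem_filter] at hH
      rw [Finset.filter_filter]
      have heq2 : (Finset.univ.filter
          fun φ : D => (φ ≠ 0 ∧ φ (Multiplicative.toAdd g) = 0) ∧ kerSub φ = H)
          = Finset.univ.filter fun φ : D => φ ≠ 0 ∧ kerSub φ = H := by
        refine Finset.filter_congr fun φ _ => ?_
        constructor
        · rintro ⟨⟨ha, _⟩, hb⟩; exact ⟨ha, hb⟩
        · rintro ⟨ha, hb⟩
          exact ⟨⟨ha, (hmem φ g).1 (hb ▸ hH.2)⟩, hb⟩
      rw [heq2]
      exact hfiber H hH.1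
    rw [Finset.sum_congr rfl h2, Finset.sum_const, smul_eq_mul, hTg] at h1
    exact h1.symm
  -- rational arithmetic preliminaries
  have hq0 : (p:ℚ) ≠ 0 := Nat.cast_ne_zero.2 hp.ne_zero
  have hq1 : (p:ℚ) - 1 ≠ 0 := by
    have h5 : (1:ℚ) < p := by exact_mod_cast hp.one_lt
    exact sub_ne_zero_of_ne h5.ne'
  have hcardH : ∀ H ∈ s, (Nat.card H : ℚ) = (p:ℚ) ^ m := by
    intro H hH
    have h3 := Subgroup.card_mul_index H
    rw [(hs H).1 hH, hGcard] at h3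
    have h4 : Nat.card H = p ^ m := Nat.eq_of_mul_eq_mul_right hp.pos (by rw [h3]; ring)
    rw [h4]; push_cast; ring
  have hTopQ : (Nat.card (⊤ : Subgroup (Multiplicative (Fin (m+1) → ZMod p))) : ℚ)
      = (p:ℚ) ^ (m+1) := by
    rw [Subgroup.card_top, hGcard]; push_cast; ring
  refine MonoidAlgebra.ext (Finsupp.ext fun g => ?_)
  rw [MonoidAlgebra.coeff_add, Finsupp.add_apply, MonoidAlgebra.coeff_smul, Finsupp.smul_apply,
    MonoidAlgebra.coeff_sum, Finsupp.finset_sum_apply, idem_apply,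
    if_pos (Subgroup.mem_top g), hTopQ, MonoidAlgebra.of_apply, MonoidAlgebra.coeff_single]
  have hsum : ∀ H ∈ s, (groupRingIdempotent H).coeff g = if g ∈ H then ((p:ℚ)^m)⁻¹ else 0 := by
    intro H hH; rw [idem_apply, hcardH H hH]
  rw [Finset.sum_congr rfl hsum, ← Finset.sum_filter, Finset.sum_const, nsmul_eq_mul]
  simp only [MonoidAlgebra.single, Finsupp.single_apply]
  by_cases hg : g = 1
  · subst hg
    rw [Finset.filter_true_of_mem (fun H _ => H.one_mem), if_pos rfl]
    have hN : ((s.card : ℚ)) * ((p:ℚ) - 1) = (p:ℚ)^(m+1) - 1 := by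
      have h4 := congrArg (fun n : ℕ => (n : ℚ)) hscard
      rw [Nat.cast_mul, Nat.cast_sub hp.one_lt.le,
        Nat.cast_sub (Nat.one_le_pow _ _ hp.pos), Nat.cast_pow, Nat.cast_one] at h4
      exact h4
    have hNval : (s.card:ℚ) = ((p:ℚ)^(m+1) - 1)/((p:ℚ)-1) := by
      rw [eq_div_iff hq1]; exact hN
    rw [hNval]
    rw [smul_eq_mul]
    field_simp
    ring
  · rw [if_neg (fun h => hg h.symm), add_zero]
    have hM : ((s.filter fun H => g ∈ H).card : ℚ) * ((p:ℚ) - 1) = (p:ℚ)^m - 1 := by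
      have h4 := congrArg (fun n : ℕ => (n : ℚ)) (hgcount g hg)
      rw [Nat.cast_mul, Nat.cast_sub hp.one_lt.le,
        Nat.cast_sub (Nat.one_le_pow _ _ hp.pos), Nat.cast_pow, Nat.cast_one] at h4
      exact h4
    have hMval : ((s.filter fun H => g ∈ H).card:ℚ) = ((p:ℚ)^m - 1)/((p:ℚ)-1) := by
      rw [eq_div_iff hq1]; exact hM
    rw [hMval]
    rw [smul_eq_mul]
    field_simp
    ring
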